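/- Let G be a group acting on a set S, and suppose the stabilizer of every point of S is an amenable subgroup of G. Then there exists a G-equivariant linear map μ⁰ : ℓ∞(G) → ℓ∞(S) with operator norm at most 1 sending the constant function 1 on G to the constant function 1 on S. -/

import Mathlib

open scoped ENNReal

/-- The constant function as an element of `ℓ∞(X)`. -/
noncomputable def lpConst (X : Type*) (c : ℝ) : lp (fun _ : X => ℝ) ∞ :=
  ⟨fun _ => c, memℓp_infty ⟨|c|, by rintro _ ⟨x, rfl⟩; simp [Real.norm_eq_abs]⟩⟩

/-- The left translation action on `ℓ∞` of a `G`-set: `(g • f)(s) = f(g⁻¹ • s)`. -/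
noncomputable def lpTranslate {G : Type*} [Group G] {α : Type*} [MulAction G α]
    (g : G) (f : lp (fun _ : α => ℝ) ∞) : lp (fun _ : α => ℝ) ∞ :=
  ⟨fun s => f (g⁻¹ • s), by
    refine memℓp_infty ?_
    obtain ⟨C, hC⟩ := (memℓp_infty_iff.mp (lp.memℓp f))
    exact ⟨C, by rintro _ ⟨s, rfl⟩; exact hC ⟨g⁻¹ • s, rfl⟩⟩⟩

/-- A left-invariant mean on `ℓ∞(G)`: a linear functional sending `1` to `1`, nonnegative
on nonnegative functions, and invariant under left translation. -/
def IsInvariantMean (G : Type*) [Group G]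
    (m : lp (fun _ : G => ℝ) ∞ →ₗ[ℝ] ℝ) : Prop :=
  m (lpConst G 1) = 1 ∧ (∀ f, (∀ x, 0 ≤ f x) → 0 ≤ m f) ∧
    ∀ (g : G) (f), m (lpTranslate g f) = m f

set_option synthInstance.maxHeartbeats 400000
set_option maxHeartbeats 1000000

/-- Precomposition with a map, as a linear map on `ℓ∞` spaces. -/
noncomputable def lpComap {α β : Type*} (φ : α → β) :
    lp (fun _ : β => ℝ) ∞ →ₗ[ℝ] lp (fun _ : α => ℝ) ∞ where
  toFun f := ⟨fun a => f (φ a), memℓp_infty ⟨‖f‖, by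
    rintro _ ⟨a, rfl⟩; exact lp.norm_apply_le_norm ENNReal.top_ne_zero f (φ a)⟩⟩
  map_add' f g := by ext a; simp [lp.coeFn_add]; rfl
  map_smul' c f := by ext a; simp [lp.coeFn_smul]

@[simp] lemma lpComap_apply {α β : Type*} (φ : α → β) (f : lp (fun _ : β => ℝ) ∞) (a : α) :
    lpComap φ f a = f (φ a) := rfl

lemma norm_lpComap_le {α β : Type*} (φ : α → β) (f : lp (fun _ : β => ℝ) ∞) :
    ‖lpComap φ f‖ ≤ ‖f‖ := by
  refine lp.norm_le_of_forall_le (norm_nonneg f) fun a => ?_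
  exact lp.norm_apply_le_norm ENNReal.top_ne_zero f (φ a)

/-- A positive normalized functional on `ℓ∞` is bounded by the sup norm. -/
lemma abs_mean_le {X : Type*} (m : lp (fun _ : X => ℝ) ∞ →ₗ[ℝ] ℝ)
    (h1 : m (lpConst X 1) = 1) (hpos : ∀ f, (∀ x, 0 ≤ f x) → 0 ≤ m f)
    (f : lp (fun _ : X => ℝ) ∞) : |m f| ≤ ‖f‖ := by
  have hb : ∀ x, |f x| ≤ ‖f‖ := fun x => lp.norm_apply_le_norm ENNReal.top_ne_zero f x
  have hconst : ∀ x : X, (‖f‖ • lpConst X 1) x = ‖f‖ := by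
    intro x; rw [lp.coeFn_smul]; simp [lpConst]
  have h1' : m (‖f‖ • lpConst X 1) = ‖f‖ := by rw [LinearMap.map_smul, h1, smul_eq_mul, mul_one]
  rw [abs_le]
  constructor
  · have := hpos (‖f‖ • lpConst X 1 + f) (fun x => by
      rw [lp.coeFn_add]; simp only [Pi.add_apply, hconst]
      linarith [neg_abs_le (f x), hb x])
    rw [LinearMap.map_add, h1'] at this; linarith
  · have := hpos (‖f‖ • lpConst X 1 - f) (fun x => by
      rw [lp.coeFn_sub]; simp only [Pi.sub_apply, hconst]
      linarith [le_abs_self (f x), hb x])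
    rw [LinearMap.map_sub, h1'] at this; linarith

section OrbitData

variable {G : Type*} [Group G] {S : Type*} [MulAction G S]

/-- A chosen basepoint in the orbit of `s`. -/
noncomputable def orbBase (G : Type*) [Group G] {S : Type*} [MulAction G S] (s : S) : S :=
  (Quotient.mk (MulAction.orbitRel G S) s).out

lemma mem_orbit_orbBase (s : S) : s ∈ MulAction.orbit G (orbBase G s) := by
  have : (MulAction.orbitRel G S) (orbBase G s) s := Quotient.mk_out s
  exact MulAction.mem_orbit_symm.mp (MulAction.orbitRel_apply.mp this)

lemma orbBase_smul (g : G) (s : S) : orbBase G (g • s) = orbBase G s := by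
  unfold orbBase
  congr 1
  exact Quotient.sound (MulAction.orbitRel_apply.mpr (MulAction.mem_orbit s g))

/-- A chosen group element carrying the basepoint to `s`. -/
noncomputable def transp (G : Type*) [Group G] {S : Type*} [MulAction G S] (s : S) : G :=
  Classical.choose (MulAction.mem_orbit_iff.mp (mem_orbit_orbBase s))

lemma transp_smul (s : S) : transp G s • orbBase G s = s :=
  Classical.choose_spec (MulAction.mem_orbit_iff.mp (mem_orbit_orbBase s))

/-- Invariance of the mean lets us change the transporter. -/
lemma mean_comap_eq_of_smul_eq (y : S)
    (m : lp (fun _ : ↥(MulAction.stabilizer G y) => ℝ) ∞ →ₗ[ℝ] ℝ)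
    (hminv : ∀ (g : ↥(MulAction.stabilizer G y)) (f), m (lpTranslate g f) = m f)
    (a c : G) (hac : a • y = c • y) (f : lp (fun _ : G => ℝ) ∞) :
    m (lpComap (fun k : ↥(MulAction.stabilizer G y) => a * (k : G)) f)
      = m (lpComap (fun k : ↥(MulAction.stabilizer G y) => c * (k : G)) f) := by
  have hk : c⁻¹ * a ∈ MulAction.stabilizer G y := by
    rw [MulAction.mem_stabilizer_iff, mul_smul, hac, inv_smul_smul]
  have key : lpComap (fun k : ↥(MulAction.stabilizer G y) => a * (k : G)) f
      = lpTranslate (⟨c⁻¹ * a, hk⟩ : ↥(MulAction.stabilizer G y))⁻¹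
          (lpComap (fun k : ↥(MulAction.stabilizer G y) => c * (k : G)) f) := by
    ext x
    show f (a * (x : G)) = f (c * (((⟨c⁻¹ * a, hk⟩ : ↥(MulAction.stabilizer G y))⁻¹)⁻¹ • x : _))
    rw [inv_inv, smul_eq_mul]
    push_cast
    rw [← mul_assoc, mul_inv_cancel_left]

  rw [key, hminv]

end OrbitData

/-- Base case `n = 0` of Proposition 2.1: if a group `G` acts on a set `S` with amenable
point stabilizers (each stabilizer carries a left invariant mean on its `ℓ∞`), then there
is a `G`-equivariant linear map `μ⁰ : ℓ∞(G) → ℓ∞(S)` of operator norm at most `1` sending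
the constant function `1` to the constant function `1`. -/
theorem exists_equivariant_norm_one_map_of_amenable_stabilizers
    {G S : Type*} [Group G] [MulAction G S]
    (h : ∀ s : S, ∃ m : lp (fun _ : ↥(MulAction.stabilizer G s) => ℝ) ∞ →ₗ[ℝ] ℝ,
      IsInvariantMean (MulAction.stabilizer G s) m) :
    ∃ μ : lp (fun _ : G => ℝ) ∞ →L[ℝ] lp (fun _ : S => ℝ) ∞,
      ‖μ‖ ≤ 1 ∧ μ (lpConst G 1) = lpConst S 1 ∧
      ∀ (g : G) (f), μ (lpTranslate g f) = lpTranslate g (μ f) := by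
  classical
  choose m hm using h
  -- entrywise bound
  have hbd : ∀ (s : S) (f : lp (fun _ : G => ℝ) ∞),
      ‖m (orbBase G s) (lpComap
        (fun k : ↥(MulAction.stabilizer G (orbBase G s)) => transp G s * (k : G)) f)‖ ≤ ‖f‖ := by
    intro s f
    rw [Real.norm_eq_abs]
    exact le_trans (abs_mean_le _ (hm _).1 (hm _).2.1 _) (norm_lpComap_le _ f)
  let L : lp (fun _ : G => ℝ) ∞ →ₗ[ℝ] lp (fun _ : S => ℝ) ∞ :=
  { toFun := fun f => ⟨fun s => m (orbBase G s) (lpComap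
        (fun k : ↥(MulAction.stabilizer G (orbBase G s)) => transp G s * (k : G)) f),
      memℓp_infty ⟨‖f‖, by rintro _ ⟨s, rfl⟩; exact hbd s f⟩⟩
    map_add' := fun f g => by
      ext s
      show m _ (lpComap _ (f + g)) = m _ (lpComap _ f) + m _ (lpComap _ g)
      rw [LinearMap.map_add, LinearMap.map_add]
    map_smul' := fun c f => by
      ext s
      show m _ (lpComap _ (c • f)) = c • m _ (lpComap _ f)
      rw [LinearMap.map_smul, LinearMap.map_smul] }
  have hLnorm : ∀ f, ‖L f‖ ≤ 1 * ‖f‖ := fun f => by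
    rw [one_mul]
    exact lp.norm_le_of_forall_le (norm_nonneg f) fun s => hbd s f
  refine ⟨L.mkContinuous 1 hLnorm, L.mkContinuous_norm_le zero_le_one hLnorm, ?_, ?_⟩
  · ext s
    show m (orbBase G s) (lpComap _ (lpConst G 1)) = (1 : ℝ)
    have : lpComap (fun k : ↥(MulAction.stabilizer G (orbBase G s)) => transp G s * (k : G))
        (lpConst G 1) = lpConst _ 1 := by ext x; rfl
    rw [this]
    exact (hm _).1
  · intro g f
    ext s
    show m (orbBase G s) (lpComap _ (lpTranslate g f))
      = m (orbBase G (g⁻¹ • s)) (lpComap _ f)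
    have step1 : lpComap (fun k : ↥(MulAction.stabilizer G (orbBase G s)) =>
          transp G s * (k : G)) (lpTranslate g f)
        = lpComap (fun k : ↥(MulAction.stabilizer G (orbBase G s)) =>
          (g⁻¹ * transp G s) * (k : G)) f := by
      ext x
      show f (g⁻¹ • (transp G s * (x : G))) = f ((g⁻¹ * transp G s) * (x : G))
      rw [smul_eq_mul, mul_assoc]
    rw [step1]
    have hb : orbBase G (g⁻¹ • s) = orbBase G s := orbBase_smul g⁻¹ s
    rw [show orbBase G (g⁻¹ • s) = orbBase G s from hb]
    refine mean_comap_eq_of_smul_eq _ _ (hm _).2.2 _ _ ?_ f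
    rw [mul_smul, transp_smul, ← hb, transp_smul]
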